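/- Let G = (V, E) be an undirected graph on V = {1,...,q} and let S be a q×q real symmetric positive definite matrix. If B₁ and B₂ are both covariance selections of S with respect to G (i.e., each B ∈ {B₁, B₂} is positive definite, satisfies B_{ij} = S_{ij} whenever i = j or (i,j) ∈ E, and (B⁻¹)_{ij} = 0 whenever i ≠ j and (i,j) ∉ E), then B₁ = B₂. -/

import Mathlib

open Matrix
open scoped MatrixOrder

-- Key lemma: a positive definite matrix with trace C + trace C⁻¹ = 2n is the identity.
lemma posDef_trace_add_trace_inv_eq {n : ℕ} {C : Matrix (Fin n) (Fin n) ℝ}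
    (hC : C.PosDef) (h : C.trace + C⁻¹.trace = 2 * n) : C = 1 := by
  have hH := hC.isHermitian
  set U : Matrix (Fin n) (Fin n) ℝ := (hH.eigenvectorUnitary : Matrix (Fin n) (Fin n) ℝ) with hU
  set lam := hH.eigenvalues with hlam
  have hUU : star U * U = 1 := mem_unitaryGroup_iff'.mp (hH.eigenvectorUnitary).2
  have hUU' : U * star U = 1 := mem_unitaryGroup_iff.mp (hH.eigenvectorUnitary).2
  have hspec : C = U * diagonal (RCLike.ofReal ∘ lam) * star U := hH.spectral_theorem
  have hpos : ∀ i, 0 < lam i := hC.eigenvalues_pos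
  have hdiag : (diagonal (RCLike.ofReal ∘ lam) : Matrix (Fin n) (Fin n) ℝ)
      = diagonal lam := by
    congr 1
  have htrC : C.trace = ∑ i, lam i := by
    rw [hspec, trace_mul_cycle, hUU, one_mul, hdiag, trace_diagonal]
  have hCinv : C⁻¹ = U * diagonal (fun i => (lam i)⁻¹) * star U := by
    apply inv_eq_right_inv
    rw [hspec, hdiag]
    calc U * diagonal lam * star U * (U * diagonal (fun i => (lam i)⁻¹) * star U)
        = U * diagonal lam * (star U * U) * diagonal (fun i => (lam i)⁻¹) * star U := by
          noncomm_ring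
      _ = U * (diagonal lam * diagonal (fun i => (lam i)⁻¹)) * star U := by
          rw [hUU]; noncomm_ring
      _ = 1 := by
          rw [diagonal_mul_diagonal]
          have : (fun i => lam i * (lam i)⁻¹) = fun _ => (1:ℝ) := by
            funext i; exact mul_inv_cancel₀ (hpos i).ne'
          rw [this, diagonal_one, mul_one, hUU']
  have htrCinv : C⁻¹.trace = ∑ i, (lam i)⁻¹ := by
    rw [hCinv, trace_mul_cycle, hUU, one_mul, trace_diagonal]
  have hsum : ∑ i, (lam i + (lam i)⁻¹ - 2) = 0 := by
    have : (2 : ℝ) * n = ∑ _i : Fin n, (2:ℝ) := by simp [mul_comm]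
    rw [Finset.sum_sub_distrib, Finset.sum_add_distrib, ← htrC, ← htrCinv]
    rw [this] at h
    linarith [h]
  have hterm : ∀ i ∈ Finset.univ, (0:ℝ) ≤ lam i + (lam i)⁻¹ - 2 := by
    intro i _
    have h1 := hpos i
    have : (lam i - 1)^2 / lam i = lam i + (lam i)⁻¹ - 2 := by
      field_simp; ring
    rw [← this]
    positivity
  have hone : ∀ i, lam i = 1 := by
    intro i
    have := (Finset.sum_eq_zero_iff_of_nonneg hterm).mp hsum i (Finset.mem_univ i)
    have h1 := hpos i
    have h2 : (lam i - 1)^2 / lam i = 0 := by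
      rw [show (lam i - 1)^2 / lam i = lam i + (lam i)⁻¹ - 2 by field_simp; ring, this]
    have := (div_eq_zero_iff.mp h2).resolve_right h1.ne'
    have := pow_eq_zero_iff (n := 2) (by norm_num) |>.mp this
    linarith
  have : diagonal lam = 1 := by
    rw [← diagonal_one]; exact congrArg diagonal (funext hone)
  rw [hspec, hdiag, this, mul_one, hUU']


/-- `B` is the covariance selection (Dempster) of `A` with respect to the graph `G`:
`B` is positive definite, agrees with `A` on the diagonal and the edge set, and its
inverse vanishes off the diagonal and the edge set. -/
def IsCovSel {q : ℕ} (G : SimpleGraph (Fin q)) (A B : Matrix (Fin q) (Fin q) ℝ) : Prop :=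
  B.PosDef ∧ (∀ i j, (i = j ∨ G.Adj i j) → B i j = A i j) ∧
    ∀ i j, i ≠ j → ¬ G.Adj i j → B⁻¹ i j = 0

theorem stmt_7 (q : ℕ) (G : SimpleGraph (Fin q)) (S B₁ B₂ : Matrix (Fin q) (Fin q) ℝ)
    (hS : S.PosDef) (hB₁ : IsCovSel G S B₁) (hB₂ : IsCovSel G S B₂) :
    B₁ = B₂ := by
  obtain ⟨h1pd, h1eq, h1inv⟩ := hB₁
  obtain ⟨h2pd, h2eq, h2inv⟩ := hB₂
  have h1det : IsUnit B₁.det := h1pd.det_pos.ne'.isUnit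
  have h2det : IsUnit B₂.det := h2pd.det_pos.ne'.isUnit
  -- trace identity
  have htr0 : ((B₂⁻¹ - B₁⁻¹) * (B₁ - B₂)).trace = 0 := by
    rw [Matrix.trace]
    apply Finset.sum_eq_zero
    intro i _
    rw [Matrix.diag_apply, Matrix.mul_apply]
    apply Finset.sum_eq_zero
    intro j _
    rcases eq_or_ne i j with h | h
    · subst h
      simp [Matrix.sub_apply, h1eq i i (Or.inl rfl), h2eq i i (Or.inl rfl)]
    · by_cases hadj : G.Adj i j
      · have : (B₁ - B₂) j i = 0 := by
          simp [Matrix.sub_apply, h1eq j i (Or.inr hadj.symm), h2eq j i (Or.inr hadj.symm)]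
        rw [this, mul_zero]
      · have : (B₂⁻¹ - B₁⁻¹) i j = 0 := by
          simp [Matrix.sub_apply, h1inv i j h hadj, h2inv i j h hadj]
        rw [this, zero_mul]
  have hexp : (B₂⁻¹ * B₁).trace + (B₁⁻¹ * B₂).trace = 2 * q := by
    have : (B₂⁻¹ - B₁⁻¹) * (B₁ - B₂)
        = B₂⁻¹ * B₁ - B₂⁻¹ * B₂ - B₁⁻¹ * B₁ + B₁⁻¹ * B₂ := by noncomm_ring
    rw [this, Matrix.nonsing_inv_mul _ h1det, Matrix.nonsing_inv_mul _ h2det] at htr0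
    simp only [Matrix.trace_add, Matrix.trace_sub, Matrix.trace_one] at htr0
    simp only [Finset.card_univ, Fintype.card_fin] at htr0
    linarith
  -- square root of B₁
  set R := CFC.sqrt B₁ with hR
  have hRps : R.PosSemidef := (CFC.sqrt_nonneg B₁).posSemidef
  have hRH : R.IsHermitian := hRps.isHermitian
  have hRR : R * R = B₁ := CFC.sqrt_mul_sqrt_self B₁ h1pd.posSemidef.nonneg
  have hRdet : IsUnit R.det := by
    have : R.det * R.det = B₁.det := by rw [← Matrix.det_mul, hRR]
    have hne : R.det ≠ 0 := by
      intro h0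
      rw [h0, mul_zero] at this
      exact h1pd.det_pos.ne' this.symm
    exact hne.isUnit
  set C := R * B₂⁻¹ * R with hC
  have h2invpd : (B₂⁻¹).PosDef := h2pd.inv
  have hCpd : C.PosDef := by
    refine Matrix.PosDef.of_dotProduct_mulVec_pos ?_ ?_
    · have : C = Rᴴ * B₂⁻¹ * R := by rw [hRH.eq]
      rw [this]
      exact Matrix.isHermitian_conjTranspose_mul_mul R h2invpd.isHermitian
    · intro x hx
      have hRx : R *ᵥ x ≠ 0 := by
        have hinj := Matrix.mulVec_injective_iff_isUnit.mpr
          ((Matrix.isUnit_iff_isUnit_det R).mpr hRdet)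
        intro h0
        apply hx
        apply hinj
        rw [h0, Matrix.mulVec_zero]
      have hq := h2invpd.dotProduct_mulVec_pos hRx
      have key : star x ⬝ᵥ C *ᵥ x = star (R *ᵥ x) ⬝ᵥ B₂⁻¹ *ᵥ (R *ᵥ x) := by
        calc star x ⬝ᵥ C *ᵥ x
            = star x ⬝ᵥ R *ᵥ (B₂⁻¹ *ᵥ (R *ᵥ x)) := by
              rw [Matrix.mulVec_mulVec, Matrix.mulVec_mulVec, hC]
          _ = (star x ᵥ* R) ⬝ᵥ (B₂⁻¹ *ᵥ (R *ᵥ x)) := Matrix.dotProduct_mulVec _ _ _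
          _ = star (R *ᵥ x) ⬝ᵥ B₂⁻¹ *ᵥ (R *ᵥ x) := by rw [Matrix.star_mulVec, hRH.eq]
      rw [key]
      exact hq
  have htrC : C.trace = (B₂⁻¹ * B₁).trace := by
    rw [hC, trace_mul_cycle, hRR, trace_mul_comm]
  have hCinv : C⁻¹ = R⁻¹ * B₂ * R⁻¹ := by
    apply Matrix.inv_eq_right_inv
    calc R * B₂⁻¹ * R * (R⁻¹ * B₂ * R⁻¹)
        = R * B₂⁻¹ * (R * R⁻¹) * B₂ * R⁻¹ := by noncomm_ring
      _ = R * (B₂⁻¹ * B₂) * R⁻¹ := by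
          rw [Matrix.mul_nonsing_inv _ hRdet]; noncomm_ring
      _ = 1 := by rw [Matrix.nonsing_inv_mul _ h2det, mul_one,
          Matrix.mul_nonsing_inv _ hRdet]
  have htrCinv : C⁻¹.trace = (B₁⁻¹ * B₂).trace := by
    rw [hCinv, trace_mul_cycle, ← Matrix.mul_inv_rev, hRR]
  have hCone : C = 1 := by
    apply posDef_trace_add_trace_inv_eq hCpd
    rw [htrC, htrCinv, hexp]
  -- conclude
  have hKeq : B₂⁻¹ = B₁⁻¹ := by
    have h1 : R⁻¹ * (R * B₂⁻¹ * R) * R⁻¹ = B₂⁻¹ := by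
      calc R⁻¹ * (R * B₂⁻¹ * R) * R⁻¹
          = (R⁻¹ * R) * B₂⁻¹ * (R * R⁻¹) := by noncomm_ring
        _ = B₂⁻¹ := by rw [Matrix.nonsing_inv_mul _ hRdet,
            Matrix.mul_nonsing_inv _ hRdet, one_mul, mul_one]
    rw [← h1, ← hC, hCone]
    rw [Matrix.mul_one, ← Matrix.mul_inv_rev, hRR]
  calc B₁ = B₁⁻¹⁻¹ := (Matrix.nonsing_inv_nonsing_inv _ h1det).symm
    _ = B₂⁻¹⁻¹ := by rw [hKeq]
    _ = B₂ := Matrix.nonsing_inv_nonsing_inv _ h2det
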